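/- Let X and Y be n×n matrices with 0 ≤ X ≤ Y entrywise, X1 ≤ b and Y1 ≤ b. Then Ĉ(X) ≤ Ĉ(Y) entrywise, and the minimal nonnegative solutions of the corresponding Riccati equations satisfy S_min(X) ≤ S_min(Y) entrywise. -/

import Mathlib

open MeasureTheory Matrix Filter

noncomputable section

/-- Entrywise Bochner integral over `(0,∞)` of a matrix-valued function. -/
def intP {n : ℕ} (f : ℝ → Matrix (Fin n) (Fin n) ℝ) : Matrix (Fin n) (Fin n) ℝ :=
  Matrix.of fun i j => ∫ x in Set.Ioi (0:ℝ), f x i j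

/-- Matrix exponential. -/
def mexp {n : ℕ} (A : Matrix (Fin n) (Fin n) ℝ) : Matrix (Fin n) (Fin n) ℝ :=
  NormedSpace.exp A

/-- `∫_0^x e^{Gs} ds` (entrywise). -/
def cumExp {n : ℕ} (G : Matrix (Fin n) (Fin n) ℝ) (x : ℝ) : Matrix (Fin n) (Fin n) ℝ :=
  Matrix.of fun i j => ∫ s in (0:ℝ)..x, mexp (s • G) i j

/-- Irreducibility of a square matrix: for all `i ≠ j` there is a path from `i` to `j`
along nonzero entries. -/
def MatIrr {m : Type*} (A : Matrix m m ℝ) : Prop :=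
  ∀ i j : m, i ≠ j → ∃ (r : ℕ) (p : ℕ → m), p 0 = i ∧ p r = j ∧
    ∀ k < r, A (p k) (p (k+1)) ≠ 0

/-- Spectral radius of a real matrix: supremum of the moduli of its complex eigenvalues. -/
def specRad {m : Type*} [Fintype m] [DecidableEq m] (A : Matrix m m ℝ) : ℝ :=
  sSup ((fun z : ℂ => ‖z‖) '' (spectrum ℂ (A.map (algebraMap ℝ ℂ))))

/-- `A` is an M-matrix: `A = s•I − B` with `B ≥ 0` entrywise and `ρ(B) ≤ s`. -/
def IsMMatrix {m : Type*} [Fintype m] [DecidableEq m] (A : Matrix m m ℝ) : Prop :=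
  ∃ (s : ℝ) (B : Matrix m m ℝ), (∀ i j, 0 ≤ B i j) ∧ specRad B ≤ s ∧
    A = s • (1 : Matrix m m ℝ) - B

/-- `A = M − N` is a regular splitting: `M` invertible, `M⁻¹ ≥ 0`, `N ≥ 0`. -/
def RegSplit {n : ℕ} (A M N : Matrix (Fin n) (Fin n) ℝ) : Prop :=
  A = M - N ∧ IsUnit M.det ∧ (∀ i j, 0 ≤ M⁻¹ i j) ∧ (∀ i j, 0 ≤ N i j)

/-- The complex characteristic roots (eigenvalues with algebraic multiplicity)
of a real matrix. -/
def cRoots {n : ℕ} (Y : Matrix (Fin n) (Fin n) ℝ) : Multiset ℂ :=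
  ((Y.map (algebraMap ℝ ℂ)).charpoly).roots

/-- substochastic matrix -/
def Substoch {n : ℕ} (W : Matrix (Fin n) (Fin n) ℝ) : Prop :=
  (∀ i j, 0 ≤ W i j) ∧ ∀ i, ∑ j, W i j ≤ 1

/-- stochastic matrix -/
def StochMat {n : ℕ} (W : Matrix (Fin n) (Fin n) ℝ) : Prop :=
  (∀ i j, 0 ≤ W i j) ∧ ∀ i, ∑ j, W i j = 1

/-- subgenerator -/
def IsSubGen {n : ℕ} (Y : Matrix (Fin n) (Fin n) ℝ) : Prop :=
  (∀ i j, i ≠ j → 0 ≤ Y i j) ∧ ∀ i, ∑ j, Y i j ≤ 0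

/-- generator -/
def IsGen {n : ℕ} (Y : Matrix (Fin n) (Fin n) ℝ) : Prop :=
  (∀ i j, i ≠ j → 0 ≤ Y i j) ∧ ∀ i, ∑ j, Y i j = 0

/-- The data of a Markov-modulated Lévy process: phase generator `Q`, Brownian
drifts `a` and volatilities `s` (denoted `σ` in the paper), Lévy densities `ν`,
phase-change jump densities `μ`, and `U0 = U(0)` (the atoms at 0 of the jump
distributions). -/
structure Dat (n : ℕ) where
  Q : Matrix (Fin n) (Fin n) ℝ
  a : Fin n → ℝ
  s : Fin n → ℝ
  ν : Fin n → ℝ → ℝ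
  μ : Fin n → Fin n → ℝ → ℝ
  U0 : Matrix (Fin n) (Fin n) ℝ

namespace Dat

variable {n : ℕ} (D : Dat n)

/-- The standing assumptions of the paper. -/
structure Good : Prop where
  hn : 1 ≤ n
  hQoff : ∀ i j, i ≠ j → 0 ≤ D.Q i j
  hQrow : ∀ i, ∑ j, D.Q i j = 0
  hQirr : MatIrr D.Q
  hs : ∀ i, 0 < D.s i
  hνc : ∀ i, ContinuousOn (D.ν i) (Set.Ioi 0)
  hν0 : ∀ i, ∀ x ∈ Set.Ioi (0:ℝ), 0 ≤ D.ν i x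
  hνi : ∀ i, IntegrableOn (D.ν i) (Set.Ioi 0)
  hU0d : ∀ i, D.U0 i i = 1
  hU0o : ∀ i j, i ≠ j → D.U0 i j ∈ Set.Icc (0:ℝ) 1
  hμc : ∀ i j, i ≠ j → ContinuousOn (D.μ i j) (Set.Ioi 0)
  hμ0 : ∀ i j, ∀ x ∈ Set.Ioi (0:ℝ), 0 ≤ D.μ i j x
  hμi : ∀ i j, i ≠ j → IntegrableOn (D.μ i j) (Set.Ioi 0)
  hμU : ∀ i j, i ≠ j → D.U0 i j + ∫ x in Set.Ioi (0:ℝ), D.μ i j x = 1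
  hμd : ∀ i x, D.μ i i x = 0

/-- `Δ_a`. -/
def Da : Matrix (Fin n) (Fin n) ℝ := Matrix.diagonal D.a

/-- `Δ_{σ²}`. -/
def Ds : Matrix (Fin n) (Fin n) ℝ := Matrix.diagonal fun i => (D.s i)^2

/-- `Δ_ν(x)`. -/
def Dν (x : ℝ) : Matrix (Fin n) (Fin n) ℝ := Matrix.diagonal fun i => D.ν i x

/-- `Q ∘ μ(x)` (Hadamard product). -/
def Qμ (x : ℝ) : Matrix (Fin n) (Fin n) ℝ := Matrix.of fun i j => D.Q i j * D.μ i j x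

/-- The matrix function `F`. -/
def F (Y : Matrix (Fin n) (Fin n) ℝ) : Matrix (Fin n) (Fin n) ℝ :=
  D.Da * Y + (1/2 : ℝ) • (D.Ds * (Y * Y))
    + intP (fun x => D.Dν x * (mexp (x • Y) - 1))
    + Matrix.hadamard D.Q D.U0
    + intP (fun x => D.Qμ x * mexp (x • Y))

/-- The drift `κ`, relative to the stationary vector `π` of `Q`. -/
def kappa (π : Fin n → ℝ) : ℝ :=
  ∑ i, π i * (D.a i + (∫ x in Set.Ioi (0:ℝ), x * D.ν i x)
    + ∑ j, D.Q i j * ∫ x in Set.Ioi (0:ℝ), x * D.μ i j x)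

/-- `π` is the (positive) stationary probability vector of `Q`. -/
def IsStat (π : Fin n → ℝ) : Prop :=
  (∀ i, 0 < π i) ∧ (∀ j, ∑ i, π i * D.Q i j = 0) ∧ ∑ i, π i = 1

/-- `H(τ, W)`. -/
def H (τ : ℝ) (W : Matrix (Fin n) (Fin n) ℝ) : Matrix (Fin n) (Fin n) ℝ :=
  intP (fun x => D.Dν x * (mexp ((τ⁻¹ * x) • (W - 1)) - 1))

/-- `K(τ, W)`. -/
def K (τ : ℝ) (W : Matrix (Fin n) (Fin n) ℝ) : Matrix (Fin n) (Fin n) ℝ :=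
  Matrix.hadamard D.Q D.U0 + intP (fun x => D.Qμ x * mexp ((τ⁻¹ * x) • (W - 1)))

/-- `B_1`. -/
def B1 : Matrix (Fin n) (Fin n) ℝ := D.Ds

/-- `B_0(τ)`. -/
def B0 (τ : ℝ) : Matrix (Fin n) (Fin n) ℝ := (2*τ) • D.Da - (2:ℝ) • D.Ds

/-- `B_{-1}(τ, W)`. -/
def Bm1 (τ : ℝ) (W : Matrix (Fin n) (Fin n) ℝ) : Matrix (Fin n) (Fin n) ℝ :=
  D.Ds - (2*τ) • D.Da + (2*τ^2) • (D.H τ W + D.K τ W)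

/-- Equation (QW): `B₁W² + B₀(τ)W + B₋₁(τ,W) = 0`. -/
def QW (τ : ℝ) (W : Matrix (Fin n) (Fin n) ℝ) : Prop :=
  D.B1 * (W * W) + D.B0 τ * W + D.Bm1 τ W = 0

/-- `B̃_{-1}(τ, W) = −B₀(τ)⁻¹ B₋₁(τ,W)`. -/
def Btm1 (τ : ℝ) (W : Matrix (Fin n) (Fin n) ℝ) : Matrix (Fin n) (Fin n) ℝ :=
  -(D.B0 τ)⁻¹ * D.Bm1 τ W

/-- `B̃_1(τ) = −B₀(τ)⁻¹ B₁`. -/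
def Bt1 (τ : ℝ) : Matrix (Fin n) (Fin n) ℝ := -(D.B0 τ)⁻¹ * D.B1

/-- `0 < τ < τ*`: `troot i` is the unique positive root `τ_i` of the quadratic
`σ_i² − 2τ a_i + 2τ²(q_ii − ∫_0^∞ ν_i)`, `τ` is positive, `τ < σ_i²/a_i` whenever
`a_i > 0`, and `τ < τ_i` for all `i`. -/
def TauOK (troot : Fin n → ℝ) (τ : ℝ) : Prop :=
  (∀ i, 0 < troot i ∧
      (D.s i)^2 - 2 * troot i * D.a i
        + 2 * (troot i)^2 * (D.Q i i - ∫ x in Set.Ioi (0:ℝ), D.ν i x) = 0 ∧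
      ∀ t > 0, (D.s i)^2 - 2 * t * D.a i
        + 2 * t^2 * (D.Q i i - ∫ x in Set.Ioi (0:ℝ), D.ν i x) = 0 → t = troot i) ∧
  0 < τ ∧ (∀ i, 0 < D.a i → τ < (D.s i)^2 / D.a i) ∧ (∀ i, τ < troot i)

/-- `ρ_i = ∫_0^∞ ν_i`. -/
def rho (i : Fin n) : ℝ := ∫ x in Set.Ioi (0:ℝ), D.ν i x

/-- `λ_i = ρ_i + |q_ii|`. -/
def lam (i : Fin n) : ℝ := D.rho i + |D.Q i i|

/-- `b_i`. -/
def b (i : Fin n) : ℝ := (Real.sqrt ((D.a i)^2 + 2 * D.lam i * (D.s i)^2) + D.a i) / (D.s i)^2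

/-- `c_i`. -/
def c (i : Fin n) : ℝ := D.b i - 2 * D.a i / (D.s i)^2

/-- `Ĉ(X)`. -/
def Chat (X : Matrix (Fin n) (Fin n) ℝ) : Matrix (Fin n) (Fin n) ℝ :=
  Matrix.hadamard (D.Q - Matrix.diagonal fun i => D.Q i i) D.U0
    + intP (fun x => D.Dν x * mexp (x • (X - Matrix.diagonal D.b)))
    + intP (fun x => D.Qμ x * mexp (x • (X - Matrix.diagonal D.b)))

/-- `NARE(W)`: the Riccati equation `S² − Δ_c S − S Δ_b + 2Δ_{σ²}⁻¹ Ĉ(W) = 0` in `S`. -/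
def NARE (W S : Matrix (Fin n) (Fin n) ℝ) : Prop :=
  S * S - Matrix.diagonal D.c * S - S * Matrix.diagonal D.b
    + (2:ℝ) • (Matrix.diagonal (fun i => ((D.s i)^2)⁻¹) * D.Chat W) = 0

/-- `S` is the minimal nonnegative solution of `NARE(W)`. -/
def MinSolNARE (W S : Matrix (Fin n) (Fin n) ℝ) : Prop :=
  (∀ i j, 0 ≤ S i j) ∧ D.NARE W S ∧
    ∀ T, (∀ i j, 0 ≤ T i j) → D.NARE W T → ∀ i j, S i j ≤ T i j

/-- `Λ` (relative to `G`). -/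
def Lam (G : Matrix (Fin n) (Fin n) ℝ) : Matrix (Fin n) (Fin n) ℝ :=
  intP (fun x => D.Dν x * cumExp G x) + intP (fun x => D.Qμ x * cumExp G x)

/-- `Θ = −2Δ_a − Δ_{σ²}G − 2Λ` (relative to `G`). -/
def Theta (G : Matrix (Fin n) (Fin n) ℝ) : Matrix (Fin n) (Fin n) ℝ :=
  (-2 : ℝ) • D.Da - D.Ds * G - (2:ℝ) • D.Lam G

/-- Integrability of the first moments `∫ x ν_i(x) dx`, `∫ x μ_ij(x) dx`. -/
def Moments : Prop :=
  (∀ i, IntegrableOn (fun x => x * D.ν i x) (Set.Ioi (0:ℝ))) ∧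
  (∀ i j, IntegrableOn (fun x => x * D.μ i j x) (Set.Ioi (0:ℝ)))

end Dat

namespace StmtAux

attribute [local instance] Matrix.linftyOpNormedAddCommGroup Matrix.linftyOpNormedRing
  Matrix.linftyOpNormedAlgebra

variable {n : ℕ}

lemma mexp_hasSum (A : Matrix (Fin n) (Fin n) ℝ) (i j : Fin n) :
    HasSum (fun k : ℕ => ((k.factorial : ℝ))⁻¹ * (A ^ k) i j) (mexp A i j) := by
  have h : HasSum (fun k : ℕ => ((k.factorial : ℝ))⁻¹ • A ^ k) (mexp A) :=
    NormedSpace.exp_series_hasSum_exp' (𝕂 := ℝ) A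
  simpa using Pi.hasSum.mp (Pi.hasSum.mp h i) j

lemma pow_entry_nonneg {A : Matrix (Fin n) (Fin n) ℝ} (hA : ∀ i j, 0 ≤ A i j) (k : ℕ) :
    ∀ i j, 0 ≤ (A ^ k) i j := by
  induction k with
  | zero => intro i j; by_cases h : i = j <;> simp [pow_zero, Matrix.one_apply, h]
  | succ k ih =>
    intro i j
    rw [pow_succ, Matrix.mul_apply]
    exact Finset.sum_nonneg fun l _ => mul_nonneg (ih i l) (hA l j)

lemma pow_entry_mono {A B : Matrix (Fin n) (Fin n) ℝ} (hA : ∀ i j, 0 ≤ A i j)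
    (hAB : ∀ i j, A i j ≤ B i j) (k : ℕ) : ∀ i j, (A ^ k) i j ≤ (B ^ k) i j := by
  induction k with
  | zero => intro i j; simp [pow_zero]
  | succ k ih =>
    intro i j
    rw [pow_succ, pow_succ, Matrix.mul_apply, Matrix.mul_apply]
    refine Finset.sum_le_sum fun l _ => ?_
    exact mul_le_mul (ih i l) (hAB l j) (hA l j)
      (pow_entry_nonneg (fun i j => le_trans (hA i j) (hAB i j)) k i l)

lemma mexp_nonneg_of_nonneg {A : Matrix (Fin n) (Fin n) ℝ} (hA : ∀ i j, 0 ≤ A i j)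
    (i j : Fin n) : 0 ≤ mexp A i j :=
  hasSum_le (fun k => mul_nonneg (by positivity) (pow_entry_nonneg hA k i j)) hasSum_zero
    (mexp_hasSum A i j)

lemma mexp_mono_of_nonneg {A B : Matrix (Fin n) (Fin n) ℝ} (hA : ∀ i j, 0 ≤ A i j)
    (hAB : ∀ i j, A i j ≤ B i j) (i j : Fin n) : mexp A i j ≤ mexp B i j :=
  hasSum_le (fun k => mul_le_mul_of_nonneg_left (pow_entry_mono hA hAB k i j) (by positivity))
    (mexp_hasSum A i j) (mexp_hasSum B i j)

lemma smul_one_eq_diag (c : ℝ) :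
    c • (1 : Matrix (Fin n) (Fin n) ℝ) = Matrix.diagonal (fun _ => c) := by
  ext i j
  by_cases h : i = j <;> simp [Matrix.one_apply, Matrix.diagonal_apply, h]

lemma mexp_shift (A : Matrix (Fin n) (Fin n) ℝ) (c : ℝ) (i j : Fin n) :
    mexp A i j = Real.exp (-c) * mexp (A + c • 1) i j := by
  unfold mexp
  have hcomm : Commute (A + c • 1) ((-c) • (1 : Matrix (Fin n) (Fin n) ℝ)) :=
    (Commute.one_right _).smul_right _
  have h1 : A = (A + c • 1) + (-c) • (1 : Matrix (Fin n) (Fin n) ℝ) := by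
    rw [add_assoc, ← add_smul]; simp
  have h2 := Matrix.exp_add_of_commute (A + c • 1) ((-c) • 1) hcomm
  rw [← h1] at h2
  have h3 : NormedSpace.exp ((-c) • (1 : Matrix (Fin n) (Fin n) ℝ)) =
      Matrix.diagonal (fun _ => Real.exp (-c)) := by
    rw [smul_one_eq_diag, Matrix.exp_diagonal]
    rw [Pi.exp_def]
    congr 1
    funext l
    rw [Real.exp_eq_exp_ℝ]
  rw [h2, h3, Matrix.mul_diagonal]
  ring

/-- Metzler: off-diagonal entries nonnegative. -/
def Metzler (A : Matrix (Fin n) (Fin n) ℝ) : Prop := ∀ i j, i ≠ j → 0 ≤ A i j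

lemma shift_nonneg {A : Matrix (Fin n) (Fin n) ℝ} (hA : Metzler A) {c : ℝ}
    (hc : ∀ i, -A i i ≤ c) : ∀ i j, 0 ≤ (A + c • 1) i j := by
  intro i j
  by_cases h : i = j
  · subst h; simpa [Matrix.one_apply] using by linarith [hc i]
  · simpa [Matrix.one_apply, h] using hA i j h

lemma mexp_nonneg {A : Matrix (Fin n) (Fin n) ℝ} (hA : Metzler A) (i j : Fin n) :
    0 ≤ mexp A i j := by
  set c : ℝ := ∑ l, |A l l| with hc
  have hcl : ∀ l, -A l l ≤ c := by
    intro l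
    calc -A l l ≤ |A l l| := neg_le_abs _
    _ ≤ c := Finset.single_le_sum (f := fun l => |A l l|) (fun l _ => abs_nonneg _)
        (Finset.mem_univ l)
  rw [mexp_shift A c i j]
  exact mul_nonneg (Real.exp_nonneg _) (mexp_nonneg_of_nonneg (shift_nonneg hA hcl) i j)

lemma mexp_mono {A B : Matrix (Fin n) (Fin n) ℝ} (hA : Metzler A) (hB : Metzler B)
    (hAB : ∀ i j, A i j ≤ B i j) (i j : Fin n) : mexp A i j ≤ mexp B i j := by
  set c : ℝ := ∑ l, (|A l l| + |B l l|) with hc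
  have hterm : ∀ l : Fin n, (0:ℝ) ≤ |A l l| + |B l l| := fun l => by positivity
  have hcA : ∀ l, -A l l ≤ c := by
    intro l
    calc -A l l ≤ |A l l| + |B l l| := le_add_of_le_of_nonneg (neg_le_abs _) (abs_nonneg _)
    _ ≤ c := Finset.single_le_sum (f := fun l => |A l l| + |B l l|) (fun l _ => hterm l)
        (Finset.mem_univ l)
  have hcB : ∀ l, -B l l ≤ c := by
    intro l
    calc -B l l ≤ |A l l| + |B l l| := le_add_of_nonneg_of_le (abs_nonneg _) (neg_le_abs _)
    _ ≤ c := Finset.single_le_sum (f := fun l => |A l l| + |B l l|) (fun l _ => hterm l)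
        (Finset.mem_univ l)
  rw [mexp_shift A c i j, mexp_shift B c i j]
  refine mul_le_mul_of_nonneg_left ?_ (Real.exp_nonneg _)
  refine mexp_mono_of_nonneg (shift_nonneg hA hcA) (fun i j => ?_) i j
  simp only [Matrix.add_apply]
  linarith [hAB i j]

lemma rowsum_pow_le {B : Matrix (Fin n) (Fin n) ℝ} (hB : ∀ i j, 0 ≤ B i j) {c : ℝ}
    (hc : 0 ≤ c) (hrow : ∀ i, ∑ j, B i j ≤ c) (k : ℕ) :
    ∀ i, ∑ j, (B ^ k) i j ≤ c ^ k := by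
  induction k with
  | zero => intro i; simp [pow_zero, Matrix.one_apply]
  | succ k ih =>
    intro i
    rw [pow_succ']
    calc ∑ j, (B * B ^ k) i j = ∑ j, ∑ l, B i l * (B ^ k) l j := by
          simp [Matrix.mul_apply]
    _ = ∑ l, B i l * (∑ j, (B ^ k) l j) := by
          rw [Finset.sum_comm]; simp [Finset.mul_sum]
    _ ≤ ∑ l, B i l * c ^ k := by
          refine Finset.sum_le_sum fun l _ => mul_le_mul_of_nonneg_left (ih l) (hB i l)
    _ = (∑ l, B i l) * c ^ k := by rw [Finset.sum_mul]
    _ ≤ c * c ^ k := mul_le_mul_of_nonneg_right (hrow i) (by positivity)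
    _ = c ^ (k + 1) := by rw [pow_succ']

lemma real_exp_hasSum (c : ℝ) :
    HasSum (fun k : ℕ => ((k.factorial : ℝ))⁻¹ * c ^ k) (Real.exp c) := by
  have := NormedSpace.exp_series_hasSum_exp' (𝕂 := ℝ) c
  rw [← Real.exp_eq_exp_ℝ] at this
  simpa [smul_eq_mul] using this

lemma mexp_rowsum_le_one {A : Matrix (Fin n) (Fin n) ℝ} (hA : Metzler A)
    (hrow : ∀ i, ∑ j, A i j ≤ 0) (i : Fin n) : ∑ j, mexp A i j ≤ 1 := by
  set c : ℝ := ∑ l, |A l l| with hcdef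
  have hc0 : 0 ≤ c := Finset.sum_nonneg fun l _ => abs_nonneg _
  have hcl : ∀ l, -A l l ≤ c := by
    intro l
    calc -A l l ≤ |A l l| := neg_le_abs _
    _ ≤ c := Finset.single_le_sum (f := fun l => |A l l|) (fun l _ => abs_nonneg _)
        (Finset.mem_univ l)
  set B := A + c • (1 : Matrix (Fin n) (Fin n) ℝ) with hBdef
  have hB : ∀ i j, 0 ≤ B i j := shift_nonneg hA hcl
  have hBrow : ∀ i, ∑ j, B i j ≤ c := by
    intro i
    have : ∑ j, B i j = (∑ j, A i j) + c := by
      simp [hBdef, Matrix.add_apply, Finset.sum_add_distrib, Matrix.one_apply,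
        Finset.sum_ite_eq, smul_eq_mul]
    rw [this]
    linarith [hrow i]
  have hsum : HasSum (fun k : ℕ => ∑ j, ((k.factorial : ℝ))⁻¹ * (B ^ k) i j)
      (∑ j, mexp B i j) := hasSum_sum fun j _ => mexp_hasSum B i j
  have hle : ∑ j, mexp B i j ≤ Real.exp c := by
    refine hasSum_le (fun k => ?_) hsum (real_exp_hasSum c)
    rw [← Finset.mul_sum]
    exact mul_le_mul_of_nonneg_left (rowsum_pow_le hB hc0 hBrow k i) (by positivity)
  have hAB : ∑ j, mexp A i j = Real.exp (-c) * ∑ j, mexp B i j := by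
    rw [Finset.mul_sum]
    exact Finset.sum_congr rfl fun j _ => mexp_shift A c i j
  rw [hAB]
  calc Real.exp (-c) * ∑ j, mexp B i j ≤ Real.exp (-c) * Real.exp c :=
        mul_le_mul_of_nonneg_left hle (Real.exp_nonneg _)
  _ = 1 := by rw [← Real.exp_add]; simp

lemma mexp_le_one {A : Matrix (Fin n) (Fin n) ℝ} (hA : Metzler A)
    (hrow : ∀ i, ∑ j, A i j ≤ 0) (i j : Fin n) : mexp A i j ≤ 1 := by
  calc mexp A i j ≤ ∑ l, mexp A i l :=
        Finset.single_le_sum (f := fun l => mexp A i l) (fun l _ => mexp_nonneg hA i l)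
          (Finset.mem_univ j)
  _ ≤ 1 := mexp_rowsum_le_one hA hrow i

lemma continuous_mexp_entry (M : Matrix (Fin n) (Fin n) ℝ) (i j : Fin n) :
    Continuous fun x : ℝ => mexp (x • M) i j := by
  have h1 : Continuous fun x : ℝ => x • M := continuous_id.smul continuous_const
  have h2 : Continuous (mexp (n := n)) := by unfold mexp; exact NormedSpace.exp_continuous
  exact (continuous_apply j).comp ((continuous_apply i).comp (h2.comp h1))

lemma smul_metzler {M : Matrix (Fin n) (Fin n) ℝ} (hM : Metzler M) {x : ℝ} (hx : 0 ≤ x) :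
    Metzler (x • M) := fun i j hij => by
  simpa [smul_eq_mul] using mul_nonneg hx (hM i j hij)

lemma smul_rowsum {M : Matrix (Fin n) (Fin n) ℝ} (hM : ∀ i, ∑ j, M i j ≤ 0) {x : ℝ}
    (hx : 0 ≤ x) : ∀ i, ∑ j, (x • M) i j ≤ 0 := fun i => by
  have : ∑ j, (x • M) i j = x * ∑ j, M i j := by
    simp [Matrix.smul_apply, smul_eq_mul, Finset.mul_sum]
  rw [this]
  exact mul_nonpos_of_nonneg_of_nonpos hx (hM i)

end StmtAux
namespace StmtAux

variable {n : ℕ} (D : Dat n)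

lemma chat_apply (W : Matrix (Fin n) (Fin n) ℝ) (i j : Fin n) :
    D.Chat W i j = (D.Q i j - Matrix.diagonal (fun i => D.Q i i) i j) * D.U0 i j
      + (∫ x in Set.Ioi (0:ℝ), D.ν i x * mexp (x • (W - Matrix.diagonal D.b)) i j)
      + ∫ x in Set.Ioi (0:ℝ),
          ∑ l, D.Q i l * (D.μ i l x * mexp (x • (W - Matrix.diagonal D.b)) l j) := by
  unfold Dat.Chat intP
  simp only [Matrix.add_apply, Matrix.of_apply, Matrix.hadamard_apply, Matrix.sub_apply,
    Dat.Dν, Dat.Qμ]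
  simp only [Matrix.diagonal_mul]
  simp only [Matrix.mul_apply, Matrix.of_apply, mul_assoc]

lemma sub_diag_metzler {W : Matrix (Fin n) (Fin n) ℝ} (hW : ∀ i j, i ≠ j → 0 ≤ W i j) :
    Metzler (W - Matrix.diagonal D.b) := by
  intro i j hij
  simpa [Matrix.sub_apply, Matrix.diagonal_apply_ne _ hij] using hW i j hij

lemma sub_diag_rowsum {W : Matrix (Fin n) (Fin n) ℝ} (hWb : ∀ i, ∑ j, W i j ≤ D.b i) :
    ∀ i, ∑ j, (W - Matrix.diagonal D.b) i j ≤ 0 := by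
  intro i
  have : ∑ j, (W - Matrix.diagonal D.b) i j = (∑ j, W i j) - D.b i := by
    simp [Matrix.sub_apply, Finset.sum_sub_distrib, Matrix.diagonal_apply]
  rw [this]
  linarith [hWb i]

lemma integrable_nu_exp (hD : D.Good) {M : Matrix (Fin n) (Fin n) ℝ} (hmet : Metzler M)
    (hrow : ∀ i, ∑ j, M i j ≤ 0) (i j : Fin n) :
    IntegrableOn (fun x => D.ν i x * mexp (x • M) i j) (Set.Ioi (0:ℝ)) := by
  refine Integrable.mono' (hD.hνi i) ?_ ?_
  · exact ((hD.hνc i).mul (continuous_mexp_entry M i j).continuousOn).aestronglyMeasurable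
      measurableSet_Ioi
  · filter_upwards [ae_restrict_mem measurableSet_Ioi] with x hx
    have hx0 : (0:ℝ) ≤ x := le_of_lt hx
    have hν : 0 ≤ D.ν i x := hD.hν0 i x hx
    have hE0 : 0 ≤ mexp (x • M) i j := mexp_nonneg (smul_metzler hmet hx0) i j
    have hE1 : mexp (x • M) i j ≤ 1 := mexp_le_one (smul_metzler hmet hx0)
      (smul_rowsum hrow hx0) i j
    rw [Real.norm_eq_abs, abs_of_nonneg (mul_nonneg hν hE0)]
    calc D.ν i x * mexp (x • M) i j ≤ D.ν i x * 1 := mul_le_mul_of_nonneg_left hE1 hν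
    _ = D.ν i x := mul_one _

lemma integrable_qmu_exp (hD : D.Good) {M : Matrix (Fin n) (Fin n) ℝ} (hmet : Metzler M)
    (hrow : ∀ i, ∑ j, M i j ≤ 0) (i j l : Fin n) :
    IntegrableOn (fun x => D.Q i l * (D.μ i l x * mexp (x • M) l j)) (Set.Ioi (0:ℝ)) := by
  by_cases hli : l = i
  · subst hli
    have : (fun x => D.Q l l * (D.μ l l x * mexp (x • M) l j)) = fun _ => (0:ℝ) := by
      funext x; simp [hD.hμd l x]
    rw [this]
    exact integrableOn_zero
  have hil : i ≠ l := fun h => hli h.symm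
  have hq : 0 ≤ D.Q i l := hD.hQoff i l hil
  refine Integrable.mono' ((hD.hμi i l hil).const_mul (D.Q i l)) ?_ ?_
  · exact (continuousOn_const.mul ((hD.hμc i l hil).mul
      (continuous_mexp_entry M l j).continuousOn)).aestronglyMeasurable measurableSet_Ioi
  · filter_upwards [ae_restrict_mem measurableSet_Ioi] with x hx
    have hx0 : (0:ℝ) ≤ x := le_of_lt hx
    have hμ : 0 ≤ D.μ i l x := hD.hμ0 i l x hx
    have hE0 : 0 ≤ mexp (x • M) l j := mexp_nonneg (smul_metzler hmet hx0) l j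
    have hE1 : mexp (x • M) l j ≤ 1 := mexp_le_one (smul_metzler hmet hx0)
      (smul_rowsum hrow hx0) l j
    rw [Real.norm_eq_abs, abs_of_nonneg (mul_nonneg hq (mul_nonneg hμ hE0))]
    calc D.Q i l * (D.μ i l x * mexp (x • M) l j) ≤ D.Q i l * (D.μ i l x * 1) := by
          refine mul_le_mul_of_nonneg_left ?_ hq
          exact mul_le_mul_of_nonneg_left hE1 hμ
    _ = D.Q i l * D.μ i l x := by rw [mul_one]

lemma integrable_qmu_sum (hD : D.Good) {M : Matrix (Fin n) (Fin n) ℝ} (hmet : Metzler M)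
    (hrow : ∀ i, ∑ j, M i j ≤ 0) (i j : Fin n) :
    IntegrableOn (fun x => ∑ l, D.Q i l * (D.μ i l x * mexp (x • M) l j)) (Set.Ioi (0:ℝ)) :=
  MeasureTheory.integrable_finset_sum _ fun l _ => integrable_qmu_exp D hD hmet hrow i j l

lemma chat_mono (hD : D.Good) (X Y : Matrix (Fin n) (Fin n) ℝ)
    (hX0 : ∀ i j, 0 ≤ X i j) (hXY : ∀ i j, X i j ≤ Y i j)
    (hXb : ∀ i, ∑ j, X i j ≤ D.b i) (hYb : ∀ i, ∑ j, Y i j ≤ D.b i) (i j : Fin n) :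
    D.Chat X i j ≤ D.Chat Y i j := by
  have hmX : Metzler (X - Matrix.diagonal D.b) := sub_diag_metzler D fun i j _ => hX0 i j
  have hmY : Metzler (Y - Matrix.diagonal D.b) :=
    sub_diag_metzler D fun i j _ => le_trans (hX0 i j) (hXY i j)
  have hrX := sub_diag_rowsum D hXb
  have hrY := sub_diag_rowsum D hYb
  have hEmono : ∀ x : ℝ, 0 ≤ x → ∀ l j,
      mexp (x • (X - Matrix.diagonal D.b)) l j ≤ mexp (x • (Y - Matrix.diagonal D.b)) l j := by
    intro x hx l j
    refine mexp_mono (smul_metzler hmX hx) (smul_metzler hmY hx) (fun i j => ?_) l j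
    have := hXY i j
    simp only [Matrix.smul_apply, Matrix.sub_apply, smul_eq_mul]
    have h2 : X i j - Matrix.diagonal D.b i j ≤ Y i j - Matrix.diagonal D.b i j := by linarith
    exact mul_le_mul_of_nonneg_left h2 hx
  rw [chat_apply, chat_apply]
  refine add_le_add (add_le_add le_rfl ?_) ?_
  · refine setIntegral_mono_on (integrable_nu_exp D hD hmX hrX i j)
      (integrable_nu_exp D hD hmY hrY i j) measurableSet_Ioi fun x hx => ?_
    exact mul_le_mul_of_nonneg_left (hEmono x (le_of_lt hx) i j) (hD.hν0 i x hx)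
  · refine setIntegral_mono_on (integrable_qmu_sum D hD hmX hrX i j)
      (integrable_qmu_sum D hD hmY hrY i j) measurableSet_Ioi fun x hx => ?_
    refine Finset.sum_le_sum fun l _ => ?_
    by_cases hli : l = i
    · subst hli; simp [hD.hμd l x]
    have hil : i ≠ l := fun h => hli h.symm
    refine mul_le_mul_of_nonneg_left ?_ (hD.hQoff i l hil)
    exact mul_le_mul_of_nonneg_left (hEmono x (le_of_lt hx) l j) (hD.hμ0 i l x hx)

lemma chat_nonneg (hD : D.Good) (W : Matrix (Fin n) (Fin n) ℝ)
    (hW0 : ∀ i j, 0 ≤ W i j) (hWb : ∀ i, ∑ j, W i j ≤ D.b i) (i j : Fin n) :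
    0 ≤ D.Chat W i j := by
  have hmW : Metzler (W - Matrix.diagonal D.b) := sub_diag_metzler D fun i j _ => hW0 i j
  rw [chat_apply]
  have h1 : 0 ≤ (D.Q i j - Matrix.diagonal (fun i => D.Q i i) i j) * D.U0 i j := by
    by_cases hij : i = j
    · subst hij; simp [Matrix.diagonal_apply_eq]
    · rw [Matrix.diagonal_apply_ne _ hij]
      exact mul_nonneg (by simpa using hD.hQoff i j hij) (hD.hU0o i j hij).1
  have h2 : 0 ≤ ∫ x in Set.Ioi (0:ℝ), D.ν i x * mexp (x • (W - Matrix.diagonal D.b)) i j := by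
    refine setIntegral_nonneg measurableSet_Ioi fun x hx => ?_
    exact mul_nonneg (hD.hν0 i x hx) (mexp_nonneg (smul_metzler hmW (le_of_lt hx)) i j)
  have h3 : 0 ≤ ∫ x in Set.Ioi (0:ℝ),
      ∑ l, D.Q i l * (D.μ i l x * mexp (x • (W - Matrix.diagonal D.b)) l j) := by
    refine setIntegral_nonneg measurableSet_Ioi fun x hx => ?_
    refine Finset.sum_nonneg fun l _ => ?_
    by_cases hli : l = i
    · subst hli; simp [hD.hμd l x]
    have hil : i ≠ l := fun h => hli h.symm
    exact mul_nonneg (hD.hQoff i l hil) (mul_nonneg (hD.hμ0 i l x hx)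
      (mexp_nonneg (smul_metzler hmW (le_of_lt hx)) l j))
  linarith

lemma nare_entry {W S : Matrix (Fin n) (Fin n) ℝ} (h : D.NARE W S) (i j : Fin n) :
    (S * S) i j + 2 * ((D.s i)^2)⁻¹ * D.Chat W i j = (D.c i + D.b j) * S i j := by
  have h' := congrFun (congrFun h i) j
  simp only [Matrix.sub_apply, Matrix.add_apply, Matrix.smul_apply, Matrix.diagonal_mul,
    Matrix.mul_diagonal, smul_eq_mul, Matrix.zero_apply] at h'
  have h'' : (S * S) i j - D.c i * S i j - S i j * D.b j
      + 2 * (((D.s i)^2)⁻¹ * D.Chat W i j) = 0 := h'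
  linarith

lemma sq_entry_mono {S S' : Matrix (Fin n) (Fin n) ℝ} (h0 : ∀ i j, 0 ≤ S i j)
    (h : ∀ i j, S i j ≤ S' i j) (i j : Fin n) : (S * S) i j ≤ (S' * S') i j := by
  rw [Matrix.mul_apply, Matrix.mul_apply]
  refine Finset.sum_le_sum fun l _ => ?_
  exact mul_le_mul (h i l) (h l j) (h0 l j) (le_trans (h0 i l) (h i l))

lemma rho_nonneg (hD : D.Good) (i : Fin n) : 0 ≤ D.rho i :=
  setIntegral_nonneg measurableSet_Ioi fun x hx => hD.hν0 i x hx

lemma lam_nonneg (hD : D.Good) (i : Fin n) : 0 ≤ D.lam i :=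
  add_nonneg (rho_nonneg D hD i) (abs_nonneg _)

lemma sqrt_ge_abs (hD : D.Good) (i : Fin n) :
    |D.a i| ≤ Real.sqrt ((D.a i)^2 + 2 * D.lam i * (D.s i)^2) := by
  have h1 : (D.a i)^2 ≤ (D.a i)^2 + 2 * D.lam i * (D.s i)^2 := by
    nlinarith [lam_nonneg D hD i, sq_nonneg (D.s i)]
  calc |D.a i| = Real.sqrt ((D.a i)^2) := (Real.sqrt_sq_eq_abs _).symm
  _ ≤ _ := Real.sqrt_le_sqrt h1

lemma b_nonneg (hD : D.Good) (i : Fin n) : 0 ≤ D.b i := by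
  have h := sqrt_ge_abs D hD i
  have := neg_abs_le (D.a i)
  refine div_nonneg (by linarith) (sq_nonneg _)

lemma c_eq (i : Fin n) :
    D.c i = (Real.sqrt ((D.a i)^2 + 2 * D.lam i * (D.s i)^2) - D.a i) / (D.s i)^2 := by
  rw [Dat.c, Dat.b]
  ring

lemma c_nonneg (hD : D.Good) (i : Fin n) : 0 ≤ D.c i := by
  rw [c_eq]
  have h := sqrt_ge_abs D hD i
  have := le_abs_self (D.a i)
  refine div_nonneg (by linarith) (sq_nonneg _)

lemma lam_zero_of_c_zero (hD : D.Good) {i : Fin n} (hc : D.c i = 0) : D.lam i = 0 := by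
  have hs2 : (0:ℝ) < (D.s i)^2 := pow_pos (hD.hs i) 2
  rw [c_eq] at hc
  have h1 : Real.sqrt ((D.a i)^2 + 2 * D.lam i * (D.s i)^2) = D.a i := by
    rcases div_eq_zero_iff.mp hc with h | h
    · linarith
    · exact absurd h (ne_of_gt hs2)
  have h2 : (0:ℝ) ≤ (D.a i)^2 + 2 * D.lam i * (D.s i)^2 := by
    nlinarith [lam_nonneg D hD i]
  have h3 : (D.a i)^2 + 2 * D.lam i * (D.s i)^2 = (D.a i)^2 := by
    have := Real.sq_sqrt h2
    rw [h1] at this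
    linarith
  nlinarith [lam_nonneg D hD i]

lemma lam_zero_of_b_zero (hD : D.Good) {i : Fin n} (hb : D.b i = 0) : D.lam i = 0 := by
  have hs2 : (0:ℝ) < (D.s i)^2 := pow_pos (hD.hs i) 2
  rw [Dat.b] at hb
  have h1 : Real.sqrt ((D.a i)^2 + 2 * D.lam i * (D.s i)^2) = -D.a i := by
    rcases div_eq_zero_iff.mp hb with h | h
    · linarith
    · exact absurd h (ne_of_gt hs2)
  have h2 : (0:ℝ) ≤ (D.a i)^2 + 2 * D.lam i * (D.s i)^2 := by
    nlinarith [lam_nonneg D hD i]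
  have h3 : (D.a i)^2 + 2 * D.lam i * (D.s i)^2 = (D.a i)^2 := by
    have := Real.sq_sqrt h2
    rw [h1] at this
    nlinarith
  nlinarith [lam_nonneg D hD i]

lemma n_eq_one (hD : D.Good) {i : Fin n} (hq : D.Q i i = 0) : n = 1 := by
  by_contra hne
  have h2 : 1 < n := lt_of_le_of_ne hD.hn (Ne.symm hne)
  obtain ⟨j, hj⟩ := Fintype.exists_ne_of_one_lt_card (by simpa using h2) i
  have hall : ∀ l, D.Q i l = 0 := by
    have hnn : ∀ l ∈ Finset.univ, (0:ℝ) ≤ D.Q i l := by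
      intro l _
      by_cases hl : l = i
      · subst hl; rw [hq]
      · exact hD.hQoff i l fun h => hl h.symm
    intro l
    exact (Finset.sum_eq_zero_iff_of_nonneg hnn).mp (hD.hQrow i) l (Finset.mem_univ l)
  obtain ⟨r, p, hp0, hpr, hstep⟩ := hD.hQirr i j (Ne.symm hj)
  cases r with
  | zero => exact hj (by rw [← hpr, hp0])
  | succ r =>
    have := hstep 0 (Nat.succ_pos r)
    rw [hp0] at this
    exact this (hall (p 1))

end StmtAux
/-- Lemma 10 of the paper: monotonicity of `Ĉ` and of the minimal
nonnegative solutions of the Riccati equations. -/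
theorem stmt12 {n : ℕ} (D : Dat n) (hD : D.Good) (X Y : Matrix (Fin n) (Fin n) ℝ)
    (hX0 : ∀ i j, 0 ≤ X i j) (hXY : ∀ i j, X i j ≤ Y i j)
    (hXb : ∀ i, ∑ j, X i j ≤ D.b i) (hYb : ∀ i, ∑ j, Y i j ≤ D.b i)
    (SX SY : Matrix (Fin n) (Fin n) ℝ)
    (hSX : D.MinSolNARE X SX) (hSY : D.MinSolNARE Y SY) :
    (∀ i j, D.Chat X i j ≤ D.Chat Y i j) ∧ (∀ i j, SX i j ≤ SY i j) := by
  classical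
  have part1 : ∀ i j, D.Chat X i j ≤ D.Chat Y i j :=
    StmtAux.chat_mono D hD X Y hX0 hXY hXb hYb
  refine ⟨part1, ?_⟩
  by_cases hpos : ∀ i j, 0 < D.c i + D.b j
  · -- main (nondegenerate) branch
    have hσ : ∀ i : Fin n, (0:ℝ) < (D.s i)^2 := fun i => pow_pos (hD.hs i) 2
    set CX : Fin n → Fin n → ℝ := fun i j => 2 * ((D.s i)^2)⁻¹ * D.Chat X i j with hCXdef
    set CY : Fin n → Fin n → ℝ := fun i j => 2 * ((D.s i)^2)⁻¹ * D.Chat Y i j with hCYdef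
    have hCX0 : ∀ i j, 0 ≤ CX i j := fun i j =>
      mul_nonneg (by positivity) (StmtAux.chat_nonneg D hD X hX0 hXb i j)
    have hCXY : ∀ i j, CX i j ≤ CY i j := fun i j =>
      mul_le_mul_of_nonneg_left (part1 i j) (by positivity)
    have hCY0 : ∀ i j, 0 ≤ CY i j := fun i j => le_trans (hCX0 i j) (hCXY i j)
    set TX : ℕ → Matrix (Fin n) (Fin n) ℝ := fun k =>
      (fun S : Matrix (Fin n) (Fin n) ℝ =>
        Matrix.of fun i j => ((S * S) i j + CX i j) / (D.c i + D.b j))^[k] 0 with hTXdef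
    set TY : ℕ → Matrix (Fin n) (Fin n) ℝ := fun k =>
      (fun S : Matrix (Fin n) (Fin n) ℝ =>
        Matrix.of fun i j => ((S * S) i j + CY i j) / (D.c i + D.b j))^[k] 0 with hTYdef
    have hTXe : ∀ k i j, TX (k+1) i j = ((TX k * TX k) i j + CX i j) / (D.c i + D.b j) := by
      intro k i j
      simp only [hTXdef, Function.iterate_succ_apply']
      rfl
    have hTYe : ∀ k i j, TY (k+1) i j = ((TY k * TY k) i j + CY i j) / (D.c i + D.b j) := by
      intro k i j
      simp only [hTYdef, Function.iterate_succ_apply']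
      rfl
    have hTX0e : ∀ i j, TX 0 i j = 0 := by intro i j; simp only [hTXdef]; rfl
    have hTY0e : ∀ i j, TY 0 i j = 0 := by intro i j; simp only [hTYdef]; rfl
    have hfixY : ∀ i j, SY i j = ((SY * SY) i j + CY i j) / (D.c i + D.b j) := by
      intro i j
      have h := StmtAux.nare_entry D hSY.2.1 i j
      rw [eq_div_iff (ne_of_gt (hpos i j))]
      simp only [hCYdef]
      linarith
    have hTY_inv : ∀ k, (∀ i j, 0 ≤ TY k i j) ∧ (∀ i j, TY k i j ≤ SY i j) := by
      intro k
      induction k with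
      | zero =>
        refine ⟨fun i j => ?_, fun i j => ?_⟩
        · rw [hTY0e]
        · rw [hTY0e]; exact hSY.1 i j
      | succ k ih =>
        have hsq0 : ∀ i j, 0 ≤ (TY k * TY k) i j := fun i j => by
          rw [Matrix.mul_apply]
          exact Finset.sum_nonneg fun l _ => mul_nonneg (ih.1 i l) (ih.1 l j)
        refine ⟨fun i j => ?_, fun i j => ?_⟩
        · rw [hTYe]
          exact div_nonneg (add_nonneg (hsq0 i j) (hCY0 i j)) (le_of_lt (hpos i j))
        · rw [hTYe, hfixY i j]
          refine (div_le_div_iff_of_pos_right (hpos i j)).mpr ?_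
          exact add_le_add (StmtAux.sq_entry_mono ih.1 ih.2 i j) le_rfl
    have hTX_inv : ∀ k, (∀ i j, 0 ≤ TX k i j) ∧ (∀ i j, TX k i j ≤ TY k i j) ∧
        (∀ i j, TX k i j ≤ TX (k+1) i j) := by
      intro k
      induction k with
      | zero =>
        refine ⟨fun i j => ?_, fun i j => ?_, fun i j => ?_⟩
        · rw [hTX0e]
        · rw [hTX0e, hTY0e]
        · rw [hTX0e, hTXe]
          refine div_nonneg (add_nonneg ?_ (hCX0 i j)) (le_of_lt (hpos i j))
          rw [Matrix.mul_apply]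
          refine Finset.sum_nonneg fun l _ => ?_
          rw [hTX0e]
          simp
      | succ k ih =>
        have hsq0 : ∀ i j, 0 ≤ (TX k * TX k) i j := fun i j => by
          rw [Matrix.mul_apply]
          exact Finset.sum_nonneg fun l _ => mul_nonneg (ih.1 i l) (ih.1 l j)
        have h1 : ∀ i j, 0 ≤ TX (k+1) i j := fun i j => by
          rw [hTXe]
          exact div_nonneg (add_nonneg (hsq0 i j) (hCX0 i j)) (le_of_lt (hpos i j))
        refine ⟨h1, fun i j => ?_, fun i j => ?_⟩
        · rw [hTXe, hTYe]
          refine (div_le_div_iff_of_pos_right (hpos i j)).mpr ?_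
          exact add_le_add (StmtAux.sq_entry_mono ih.1 ih.2.1 i j) (hCXY i j)
        · rw [hTXe, hTXe]
          refine (div_le_div_iff_of_pos_right (hpos i j)).mpr ?_
          exact add_le_add (StmtAux.sq_entry_mono ih.1 ih.2.2 i j) le_rfl
    have hTXb : ∀ k i j, TX k i j ≤ SY i j := fun k i j =>
      le_trans ((hTX_inv k).2.1 i j) ((hTY_inv k).2 i j)
    have hmono : ∀ i j, Monotone fun k => TX k i j := fun i j =>
      monotone_nat_of_le_succ fun k => (hTX_inv k).2.2 i j
    have hbdd : ∀ i j, BddAbove (Set.range fun k => TX k i j) := fun i j =>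
      ⟨SY i j, by rintro _ ⟨k, rfl⟩; exact hTXb k i j⟩
    set LX : Matrix (Fin n) (Fin n) ℝ := Matrix.of fun i j => ⨆ k, TX k i j with hLXdef
    have hL : ∀ i j, Tendsto (fun k => TX k i j) atTop (nhds (LX i j)) := fun i j =>
      tendsto_atTop_ciSup (hmono i j) (hbdd i j)
    have hLnn : ∀ i j, 0 ≤ LX i j := fun i j =>
      ge_of_tendsto' (hL i j) fun k => (hTX_inv k).1 i j
    have hLle : ∀ i j, LX i j ≤ SY i j := fun i j =>
      le_of_tendsto' (hL i j) fun k => hTXb k i j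
    have hLfix : ∀ i j, LX i j = ((LX * LX) i j + CX i j) / (D.c i + D.b j) := by
      intro i j
      have l1 : Tendsto (fun k => TX (k+1) i j) atTop (nhds (LX i j)) :=
        (hL i j).comp (tendsto_add_atTop_nat 1)
      have l2 : Tendsto (fun k => ((TX k * TX k) i j + CX i j) / (D.c i + D.b j)) atTop
          (nhds (((LX * LX) i j + CX i j) / (D.c i + D.b j))) := by
        refine Tendsto.div_const ?_ _
        refine Tendsto.add ?_ tendsto_const_nhds
        simp only [Matrix.mul_apply]
        exact tendsto_finset_sum _ fun l _ => (hL i l).mul (hL l j)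
      have heq : (fun k => TX (k+1) i j)
          = fun k => ((TX k * TX k) i j + CX i j) / (D.c i + D.b j) := by
        funext k; rw [hTXe]
      rw [heq] at l1
      exact tendsto_nhds_unique l1 l2
    have hLNARE : D.NARE X LX := by
      unfold Dat.NARE
      ext i j
      simp only [Matrix.sub_apply, Matrix.add_apply, Matrix.smul_apply, Matrix.diagonal_mul,
        Matrix.mul_diagonal, smul_eq_mul, Matrix.zero_apply]
      have h := hLfix i j
      rw [eq_div_iff (ne_of_gt (hpos i j))] at h
      simp only [hCXdef] at h
      linarith
    exact fun i j => le_trans (hSX.2.2 LX hLnn hLNARE i j) (hLle i j)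
  · -- degenerate branch: some c i + b j ≤ 0, forcing n = 1 and everything trivial
    push_neg at hpos
    obtain ⟨i, j, hij⟩ := hpos
    have hc0 := StmtAux.c_nonneg D hD i
    have hb0 := StmtAux.b_nonneg D hD j
    have hci : D.c i = 0 := le_antisymm (by linarith) hc0
    have hbj : D.b j = 0 := le_antisymm (by linarith) hb0
    have hlami : D.lam i = 0 := StmtAux.lam_zero_of_c_zero D hD hci
    have hρi : D.rho i = 0 := by
      have h1 := StmtAux.rho_nonneg D hD i
      have h2 := abs_nonneg (D.Q i i)
      have h3 : D.rho i + |D.Q i i| = 0 := hlami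
      linarith
    have hQii : D.Q i i = 0 := by
      have h1 := StmtAux.rho_nonneg D hD i
      have h3 : D.rho i + |D.Q i i| = 0 := hlami
      have : |D.Q i i| = 0 := by linarith
      exact abs_eq_zero.mp this
    have hn1 : n = 1 := StmtAux.n_eq_one D hD hQii
    subst hn1
    have hνae : D.ν i =ᵐ[volume.restrict (Set.Ioi (0:ℝ))] 0 := by
      have hnn : (0:ℝ → ℝ) ≤ᵐ[volume.restrict (Set.Ioi (0:ℝ))] D.ν i :=
        (ae_restrict_mem measurableSet_Ioi).mono fun x hx => hD.hν0 i x hx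
      exact (integral_eq_zero_iff_of_nonneg_ae hnn (hD.hνi i)).mp hρi
    have hChat0 : ∀ (W : Matrix (Fin 1) (Fin 1) ℝ) (i' j' : Fin 1), D.Chat W i' j' = 0 := by
      intro W i' j'
      have hii : i' = i := Subsingleton.elim _ _
      have hjj : j' = i := Subsingleton.elim _ _
      rw [hii, hjj, StmtAux.chat_apply]
      have e1 : (D.Q i i - Matrix.diagonal (fun i => D.Q i i) i i) * D.U0 i i = 0 := by
        rw [Matrix.diagonal_apply_eq]; ring
      have e2 : (∫ x in Set.Ioi (0:ℝ),
          D.ν i x * mexp (x • (W - Matrix.diagonal D.b)) i i) = 0 := by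
        have hz : (fun x => D.ν i x * mexp (x • (W - Matrix.diagonal D.b)) i i)
            =ᵐ[volume.restrict (Set.Ioi (0:ℝ))] 0 := by
          filter_upwards [hνae] with x hx
          simp only [Pi.zero_apply] at hx ⊢
          rw [hx, zero_mul]
        rw [integral_congr_ae hz]
        simp
      have e3 : (∫ x in Set.Ioi (0:ℝ),
          ∑ l, D.Q i l * (D.μ i l x * mexp (x • (W - Matrix.diagonal D.b)) l i)) = 0 := by
        have hz : (fun x => ∑ l, D.Q i l *
            (D.μ i l x * mexp (x • (W - Matrix.diagonal D.b)) l i)) = fun _ => (0:ℝ) := by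
          funext x
          refine Finset.sum_eq_zero fun l _ => ?_
          have hl : l = i := Subsingleton.elim _ _
          subst hl
          rw [hD.hμd l x, zero_mul, mul_zero]
        rw [hz]
        simp
      rw [e1, e2, e3]
      ring
    have hNARE0 : ∀ W : Matrix (Fin 1) (Fin 1) ℝ, D.NARE W 0 := by
      intro W
      have hCW : D.Chat W = 0 := by
        ext i' j'
        rw [hChat0 W i' j']
        rfl
      unfold Dat.NARE
      rw [hCW]
      simp
    have hSX0 : ∀ i' j', SX i' j' = 0 := fun i' j' =>
      le_antisymm (by simpa using hSX.2.2 0 (fun _ _ => le_refl 0) (hNARE0 X) i' j')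
        (hSX.1 i' j')
    have hSY0 : ∀ i' j', SY i' j' = 0 := fun i' j' =>
      le_antisymm (by simpa using hSY.2.2 0 (fun _ _ => le_refl 0) (hNARE0 Y) i' j')
        (hSY.1 i' j')
    intro i' j'
    rw [hSX0 i' j', hSY0 i' j']
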